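/- Let H and K be Hilbert spaces. If {u_i}_{i∈I} is a frame for H with frame bounds A and B, and {v_j}_{j∈J} is a frame for K with frame bounds C and D, then {u_i ⊗ v_j}_{i∈I, j∈J} is a frame for the Hilbert space tensor product H⊗K with frame bounds AC and BD; that is, for all z ∈ H⊗K, AC‖z‖² ≤ Σ_{i∈I}Σ_{j∈J} |⟨z, u_i⊗v_j⟩|² ≤ BD‖z‖². -/

import Mathlib

open scoped ComplexConjugate ENNReal NNReal

lemma tpf_core
    {H K T : Type*}
    [NormedAddCommGroup H] [InnerProductSpace ℂ H]
    [NormedAddCommGroup K] [InnerProductSpace ℂ K]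
    [NormedAddCommGroup T] [InnerProductSpace ℂ T]
    {I J : Type*}
    (tm : H →ₗ[ℂ] K →ₗ[ℂ] T)
    (htm_inner : ∀ (x x' : H) (y y' : K),
      (inner ℂ (tm x y) (tm x' y') : ℂ) = (inner ℂ x x' : ℂ) * (inner ℂ y y' : ℂ))
    (u : I → H) (v : J → K) (A B C D : ℝ)
    (hA : 0 ≤ A) (hB : 0 ≤ B) (hC : 0 ≤ C) (hD : 0 ≤ D)
    (hu_sum : ∀ x : H, Summable fun i => ‖(inner ℂ x (u i) : ℂ)‖ ^ 2)
    (hu_lower : ∀ x : H, A * ‖x‖ ^ 2 ≤ ∑' i, ‖(inner ℂ x (u i) : ℂ)‖ ^ 2)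
    (hu_upper : ∀ x : H, ∑' i, ‖(inner ℂ x (u i) : ℂ)‖ ^ 2 ≤ B * ‖x‖ ^ 2)
    (hv_sum : ∀ y : K, Summable fun j => ‖(inner ℂ y (v j) : ℂ)‖ ^ 2)
    (hv_lower : ∀ y : K, C * ‖y‖ ^ 2 ≤ ∑' j, ‖(inner ℂ y (v j) : ℂ)‖ ^ 2)
    (hv_upper : ∀ y : K, ∑' j, ‖(inner ℂ y (v j) : ℂ)‖ ^ 2 ≤ D * ‖y‖ ^ 2)
    {n : ℕ} (x : Fin n → H) (e : Fin n → K) (he : Orthonormal ℂ e)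
    (z : T) (hz : z = ∑ m, tm (x m) (e m)) :
    Summable (fun p : I × J => ‖(inner ℂ z (tm (u p.1) (v p.2)) : ℂ)‖ ^ 2) ∧
      A * C * ‖z‖ ^ 2 ≤ ∑' p : I × J, ‖(inner ℂ z (tm (u p.1) (v p.2)) : ℂ)‖ ^ 2 ∧
      ∑' p : I × J, ‖(inner ℂ z (tm (u p.1) (v p.2)) : ℂ)‖ ^ 2 ≤ B * D * ‖z‖ ^ 2 := by
  classical
  -- the fiber vectors
  set w : I → K := fun i => ∑ m, (conj (inner ℂ (x m) (u i) : ℂ)) • e m with hw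
  have key1 : ∀ (i : I) (y : K),
      (inner ℂ z (tm (u i) y) : ℂ) = inner ℂ (w i) y := by
    intro i y
    rw [hz, hw]
    simp only [sum_inner, inner_smul_left, htm_inner, RingHom.id_apply, starRingEnd_self_apply]
  have key2 : ∀ i : I, ‖w i‖ ^ 2 = ∑ m, ‖(inner ℂ (x m) (u i) : ℂ)‖ ^ 2 := by
    intro i
    have h1 : (inner ℂ (w i) (w i) : ℂ)
        = ∑ m, conj (conj (inner ℂ (x m) (u i) : ℂ)) * conj (inner ℂ (x m) (u i) : ℂ) :=
      he.inner_sum _ _ _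
    have h2 : (inner ℂ (w i) (w i) : ℂ) = (‖w i‖ ^ 2 : ℝ) := by
      rw [inner_self_eq_norm_sq_to_K]; norm_num
    rw [h2] at h1
    have : ((‖w i‖ ^ 2 : ℝ) : ℂ) = ((∑ m, ‖(inner ℂ (x m) (u i) : ℂ)‖ ^ 2 : ℝ) : ℂ) := by
      rw [h1]
      push_cast
      refine Finset.sum_congr rfl fun m _ => ?_
      rw [starRingEnd_self_apply, Complex.mul_conj]
      simp [Complex.normSq_eq_norm_sq]
    exact_mod_cast this
  have hnorm : ‖z‖ ^ 2 = ∑ m, ‖x m‖ ^ 2 := by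
    have h1 : (inner ℂ z z : ℂ) = ∑ m, ∑ m', (inner ℂ (x m) (x m') : ℂ) * (inner ℂ (e m) (e m') : ℂ) := by
      rw [hz]
      simp only [sum_inner, inner_sum, htm_inner]
      rw [Finset.sum_comm]
    have h2 : (inner ℂ z z : ℂ) = ∑ m, (inner ℂ (x m) (x m) : ℂ) := by
      rw [h1]
      refine Finset.sum_congr rfl fun m _ => ?_
      rw [Finset.sum_eq_single m]
      · rw [orthonormal_iff_ite.mp he, if_pos rfl, mul_one]
      · intro m' _ hm'
        rw [orthonormal_iff_ite.mp he, if_neg (by simpa using hm'.symm), mul_zero]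
      · simp
    rw [inner_self_eq_norm_sq_to_K] at h2
    simp only [inner_self_eq_norm_sq_to_K] at h2
    exact_mod_cast h2
  have hEj : ∀ i : I, (fun j => ‖(inner ℂ z (tm (u i) (v j)) : ℂ)‖ ^ 2)
      = fun j => ‖(inner ℂ (w i) (v j) : ℂ)‖ ^ 2 := fun i => funext fun j => by rw [key1]
  have hinner_sum : ∀ i, Summable fun j => ‖(inner ℂ z (tm (u i) (v j)) : ℂ)‖ ^ 2 := by
    intro i; rw [hEj i]; exact hv_sum (w i)
  have hw_sq_summable : Summable fun i => ‖w i‖ ^ 2 := by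
    simp only [key2]
    exact summable_sum fun m _ => hu_sum (x m)
  have houter_le : ∀ i, ∑' j, ‖(inner ℂ z (tm (u i) (v j)) : ℂ)‖ ^ 2 ≤ D * ‖w i‖ ^ 2 := by
    intro i; rw [hEj i]; exact hv_upper (w i)
  have houter_ge : ∀ i, C * ‖w i‖ ^ 2 ≤ ∑' j, ‖(inner ℂ z (tm (u i) (v j)) : ℂ)‖ ^ 2 := by
    intro i; rw [hEj i]; exact hv_lower (w i)
  have houter_sum : Summable fun i => ∑' j, ‖(inner ℂ z (tm (u i) (v j)) : ℂ)‖ ^ 2 := by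
    refine Summable.of_nonneg_of_le (fun i => tsum_nonneg fun j => by positivity)
      houter_le (hw_sq_summable.mul_left D)
  have hsummable : Summable (fun p : I × J => ‖(inner ℂ z (tm (u p.1) (v p.2)) : ℂ)‖ ^ 2) :=
    (summable_prod_of_nonneg fun p => by positivity).mpr ⟨hinner_sum, houter_sum⟩
  have htsum : ∑' p : I × J, ‖(inner ℂ z (tm (u p.1) (v p.2)) : ℂ)‖ ^ 2
      = ∑' i, ∑' j, ‖(inner ℂ z (tm (u i) (v j)) : ℂ)‖ ^ 2 := Summable.tsum_prod hsummable
  have hwsum : ∑' i, ‖w i‖ ^ 2 = ∑ m, ∑' i, ‖(inner ℂ (x m) (u i) : ℂ)‖ ^ 2 := by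
    simp only [key2]
    exact Summable.tsum_finsetSum fun m _ => hu_sum (x m)
  have hwlow : A * ‖z‖ ^ 2 ≤ ∑' i, ‖w i‖ ^ 2 := by
    rw [hwsum, hnorm, Finset.mul_sum]
    exact Finset.sum_le_sum fun m _ => hu_lower (x m)
  have hwup : ∑' i, ‖w i‖ ^ 2 ≤ B * ‖z‖ ^ 2 := by
    rw [hwsum, hnorm, Finset.mul_sum]
    exact Finset.sum_le_sum fun m _ => hu_upper (x m)
  refine ⟨hsummable, ?_, ?_⟩
  · rw [htsum]
    calc A * C * ‖z‖ ^ 2 = C * (A * ‖z‖ ^ 2) := by ring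
      _ ≤ C * ∑' i, ‖w i‖ ^ 2 := mul_le_mul_of_nonneg_left hwlow hC
      _ = ∑' i, C * ‖w i‖ ^ 2 := tsum_mul_left.symm
      _ ≤ ∑' i, ∑' j, ‖(inner ℂ z (tm (u i) (v j)) : ℂ)‖ ^ 2 :=
        Summable.tsum_le_tsum houter_ge (hw_sq_summable.mul_left C) houter_sum
  · rw [htsum]
    calc ∑' i, ∑' j, ‖(inner ℂ z (tm (u i) (v j)) : ℂ)‖ ^ 2
        ≤ ∑' i, D * ‖w i‖ ^ 2 :=
          Summable.tsum_le_tsum houter_le houter_sum (hw_sq_summable.mul_left D)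
      _ = D * ∑' i, ‖w i‖ ^ 2 := tsum_mul_left
      _ ≤ D * (B * ‖z‖ ^ 2) := mul_le_mul_of_nonneg_left hwup hD
      _ = B * D * ‖z‖ ^ 2 := by ring



lemma tpf_span_rep
    {H K T : Type*} [NormedAddCommGroup H] [InnerProductSpace ℂ H]
    [NormedAddCommGroup K] [InnerProductSpace ℂ K]
    [NormedAddCommGroup T] [InnerProductSpace ℂ T]
    (tm : H →ₗ[ℂ] K →ₗ[ℂ] T) {z : T}
    (hz : z ∈ Submodule.span ℂ {z : T | ∃ x y, tm x y = z}) :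
    ∃ (n : ℕ) (x : Fin n → H) (e : Fin n → K), Orthonormal ℂ e ∧ z = ∑ m, tm (x m) (e m) := by
  classical
  -- step 1: plain representation
  have hrep : ∃ (n : ℕ) (x : Fin n → H) (y : Fin n → K), z = ∑ k, tm (x k) (y k) := by
    refine Submodule.span_induction ?_ ?_ ?_ ?_ hz
    · rintro w ⟨x, y, rfl⟩
      exact ⟨1, fun _ => x, fun _ => y, by simp⟩
    · exact ⟨0, Fin.elim0, Fin.elim0, by simp⟩
    · rintro w w' _ _ ⟨n, x, y, rfl⟩ ⟨n', x', y', rfl⟩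
      refine ⟨n + n', Fin.append x x', Fin.append y y', ?_⟩
      rw [Fin.sum_univ_add]
      simp [Fin.append]
    · rintro c w _ ⟨n, x, y, rfl⟩
      refine ⟨n, fun k => c • x k, y, ?_⟩
      rw [Finset.smul_sum]
      simp
  obtain ⟨n, x, y, rfl⟩ := hrep
  -- step 2: orthonormalize the second factors
  set W : Submodule ℂ K := Submodule.span ℂ (Set.range y) with hW
  have : Module.Finite ℂ W := Module.Finite.span_of_finite ℂ (Set.finite_range y)
  let b : OrthonormalBasis (Fin (Module.finrank ℂ W)) ℂ W := stdOrthonormalBasis ℂ W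
  have he : Orthonormal ℂ (fun m => (b m : K)) := by
    rw [orthonormal_iff_ite]
    intro m m'
    rw [← Submodule.coe_inner, orthonormal_iff_ite.mp b.orthonormal]
  have hmem : ∀ k, y k ∈ W := fun k => Submodule.subset_span (Set.mem_range_self k)
  set c : Fin n → Fin (Module.finrank ℂ W) → ℂ := fun k m => b.repr ⟨y k, hmem k⟩ m with hc
  have hy : ∀ k, y k = ∑ m, c k m • (b m : K) := by
    intro k
    have := b.sum_repr ⟨y k, hmem k⟩
    have := congrArg (Submodule.subtype W) this
    simpa [Submodule.coe_sum] using this.symm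
  refine ⟨Module.finrank ℂ W, fun m => ∑ k, c k m • x k, fun m => (b m : K), he, ?_⟩
  calc ∑ k, tm (x k) (y k) = ∑ k, ∑ m, c k m • tm (x k) (b m : K) := by
        refine Finset.sum_congr rfl fun k _ => ?_
        rw [hy k]
        simp [map_sum]
    _ = ∑ m, ∑ k, c k m • tm (x k) (b m : K) := Finset.sum_comm
    _ = ∑ m, tm (∑ k, c k m • x k) (b m : K) := by
        refine Finset.sum_congr rfl fun m _ => ?_
        simp [map_sum, LinearMap.sum_apply]



/-- If `{u i}` is a frame for the Hilbert space `H` with bounds `A, B` and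
`{v j}` is a frame for the Hilbert space `K` with bounds `C, D`, then `{u i ⊗ v j}` is a
frame for the Hilbert space tensor product `H ⊗ K` with bounds `A*C, B*D`.  The Hilbert
space tensor product is encoded as a Hilbert space `T` together with a bilinear map
`tm : H → K → T` satisfying `⟪x⊗y, x'⊗y'⟫ = ⟪x,x'⟫⟪y,y'⟫` whose range spans a dense
subspace. -/
theorem tensor_product_frame_of_frames
    {H K T : Type*}
    [NormedAddCommGroup H] [InnerProductSpace ℂ H] [CompleteSpace H]
    [NormedAddCommGroup K] [InnerProductSpace ℂ K] [CompleteSpace K]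
    [NormedAddCommGroup T] [InnerProductSpace ℂ T] [CompleteSpace T]
    {I J : Type*} [Countable I] [Countable J]
    -- the tensor product structure
    (tm : H →ₗ[ℂ] K →ₗ[ℂ] T)
    (htm_inner : ∀ (x x' : H) (y y' : K),
      (inner ℂ (tm x y) (tm x' y') : ℂ) = (inner ℂ x x' : ℂ) * (inner ℂ y y' : ℂ))
    (htm_dense : Dense (Submodule.span ℂ {z : T | ∃ x y, tm x y = z} : Set T))
    -- the frames
    (u : I → H) (v : J → K) (A B C D : ℝ)
    (hA : 0 < A) (hAB : A ≤ B) (hC : 0 < C) (hCD : C ≤ D)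
    (hu_sum : ∀ x : H, Summable fun i => ‖(inner ℂ x (u i) : ℂ)‖ ^ 2)
    (hu_lower : ∀ x : H, A * ‖x‖ ^ 2 ≤ ∑' i, ‖(inner ℂ x (u i) : ℂ)‖ ^ 2)
    (hu_upper : ∀ x : H, ∑' i, ‖(inner ℂ x (u i) : ℂ)‖ ^ 2 ≤ B * ‖x‖ ^ 2)
    (hv_sum : ∀ y : K, Summable fun j => ‖(inner ℂ y (v j) : ℂ)‖ ^ 2)
    (hv_lower : ∀ y : K, C * ‖y‖ ^ 2 ≤ ∑' j, ‖(inner ℂ y (v j) : ℂ)‖ ^ 2)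
    (hv_upper : ∀ y : K, ∑' j, ‖(inner ℂ y (v j) : ℂ)‖ ^ 2 ≤ D * ‖y‖ ^ 2) :
    ∀ z : T,
      Summable (fun p : I × J => ‖(inner ℂ z (tm (u p.1) (v p.2)) : ℂ)‖ ^ 2) ∧
      A * C * ‖z‖ ^ 2 ≤ ∑' p : I × J, ‖(inner ℂ z (tm (u p.1) (v p.2)) : ℂ)‖ ^ 2 ∧
      ∑' p : I × J, ‖(inner ℂ z (tm (u p.1) (v p.2)) : ℂ)‖ ^ 2 ≤ B * D * ‖z‖ ^ 2 := by
  classical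
  have hB : 0 < B := hA.trans_le hAB
  have hD : 0 < D := hC.trans_le hCD
  have hBD : (0:ℝ) ≤ B * D := by positivity
  -- the statement on the dense span
  have spanP : ∀ z ∈ Submodule.span ℂ {z : T | ∃ x y, tm x y = z},
      Summable (fun p : I × J => ‖(inner ℂ z (tm (u p.1) (v p.2)) : ℂ)‖ ^ 2) ∧
      A * C * ‖z‖ ^ 2 ≤ ∑' p : I × J, ‖(inner ℂ z (tm (u p.1) (v p.2)) : ℂ)‖ ^ 2 ∧
      ∑' p : I × J, ‖(inner ℂ z (tm (u p.1) (v p.2)) : ℂ)‖ ^ 2 ≤ B * D * ‖z‖ ^ 2 := by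
    intro z hzmem
    obtain ⟨n, x, e, he, hzeq⟩ := tpf_span_rep tm hzmem
    exact tpf_core tm htm_inner u v A B C D hA.le hB.le hC.le hD.le
      hu_sum hu_lower hu_upper hv_sum hv_lower hv_upper x e he z hzeq
  have hclosure : closure ((Submodule.span ℂ {z : T | ∃ x y, tm x y = z} : Submodule ℂ T) : Set T)
      = Set.univ := htm_dense.closure_eq
  -- finite partial sums are bounded by B*D*‖z‖², for every z (by density)
  have stepA : ∀ (P : Finset (I × J)) (z : T),
      ∑ p ∈ P, ‖(inner ℂ z (tm (u p.1) (v p.2)) : ℂ)‖ ^ 2 ≤ B * D * ‖z‖ ^ 2 := by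
    intro P
    have hcl : IsClosed {z : T |
        ∑ p ∈ P, ‖(inner ℂ z (tm (u p.1) (v p.2)) : ℂ)‖ ^ 2 ≤ B * D * ‖z‖ ^ 2} := by
      apply isClosed_le
      · exact continuous_finset_sum _ fun p _ =>
          ((continuous_id.inner continuous_const).norm.pow 2)
      · exact continuous_const.mul (continuous_norm.pow 2)
    have hsub : ((Submodule.span ℂ {z : T | ∃ x y, tm x y = z} : Submodule ℂ T) : Set T) ⊆
        {z : T | ∑ p ∈ P, ‖(inner ℂ z (tm (u p.1) (v p.2)) : ℂ)‖ ^ 2 ≤ B * D * ‖z‖ ^ 2} := by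
      intro z hzc
      obtain ⟨hsumm, _, hup⟩ := spanP z hzc
      exact le_trans (Summable.sum_le_tsum P (fun p _ => by positivity) hsumm) hup
    intro z
    have hzc : z ∈ closure ((Submodule.span ℂ {z : T | ∃ x y, tm x y = z} : Submodule ℂ T) :
        Set T) := by rw [hclosure]; trivial
    exact hcl.closure_subset_iff.mpr hsub hzc
  -- summability and the upper bound, for every z
  have stepB : ∀ z : T,
      Summable (fun p : I × J => ‖(inner ℂ z (tm (u p.1) (v p.2)) : ℂ)‖ ^ 2) := fun z =>
    summable_of_sum_le (fun p => by positivity) (fun P => stepA P z)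
  have stepC : ∀ z : T,
      ∑' p : I × J, ‖(inner ℂ z (tm (u p.1) (v p.2)) : ℂ)‖ ^ 2 ≤ B * D * ‖z‖ ^ 2 := fun z =>
    Summable.tsum_le_of_sum_le (stepB z) (fun P => stepA P z)
  -- the analysis operator into ℓ²(I × J)
  have memlp : ∀ z : T,
      Memℓp (fun p : I × J => (inner ℂ z (tm (u p.1) (v p.2)) : ℂ)) 2 := by
    intro z
    apply memℓp_gen
    have hfun : (fun p : I × J => ‖(inner ℂ z (tm (u p.1) (v p.2)) : ℂ)‖ ^ (2 : ℝ≥0∞).toReal)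
        = fun p : I × J => ‖(inner ℂ z (tm (u p.1) (v p.2)) : ℂ)‖ ^ (2 : ℕ) := by
      funext p
      rw [show ((2 : ℝ≥0∞).toReal) = ((2 : ℕ) : ℝ) by norm_num, Real.rpow_natCast]
    rw [hfun]
    exact stepB z
  set φ : T → lp (fun _ : I × J => ℂ) 2 :=
    fun z => ⟨fun p : I × J => (inner ℂ z (tm (u p.1) (v p.2)) : ℂ), memlp z⟩ with hφ
  have hφnorm : ∀ z : T,
      ‖φ z‖ ^ 2 = ∑' p : I × J, ‖(inner ℂ z (tm (u p.1) (v p.2)) : ℂ)‖ ^ 2 := by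
    intro z
    have h0 : (0:ℝ) < (2 : ℝ≥0∞).toReal := by norm_num
    have := lp.norm_rpow_eq_tsum h0 (φ z)
    rw [show ((2 : ℝ≥0∞).toReal) = ((2 : ℕ) : ℝ) by norm_num] at this
    simp only [Real.rpow_natCast] at this
    exact this
  have hφsub : ∀ z z' : T, φ z - φ z' = φ (z - z') := by
    intro z z'
    apply lp.ext
    funext p
    simp only [hφ, lp.coeFn_sub, Pi.sub_apply]
    rw [inner_sub_left]
  have hφle : ∀ z : T, ‖φ z‖ ≤ Real.sqrt (B * D) * ‖z‖ := by
    intro z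
    have h1 : ‖φ z‖ ^ 2 ≤ B * D * ‖z‖ ^ 2 := by rw [hφnorm z]; exact stepC z
    have h2 := Real.sqrt_le_sqrt h1
    rwa [Real.sqrt_sq (norm_nonneg _), Real.sqrt_mul hBD, Real.sqrt_sq (norm_nonneg _)] at h2
  have hφlip : LipschitzWith (Real.toNNReal (Real.sqrt (B * D))) φ := by
    apply LipschitzWith.of_dist_le_mul
    intro z z'
    rw [dist_eq_norm, dist_eq_norm, hφsub z z']
    calc ‖φ (z - z')‖ ≤ Real.sqrt (B * D) * ‖z - z'‖ := hφle _
      _ = (Real.toNNReal (Real.sqrt (B * D)) : ℝ) * ‖z - z'‖ := by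
          rw [Real.coe_toNNReal _ (Real.sqrt_nonneg _)]
  -- the lower bound, for every z (by density)
  have stepD : ∀ z : T,
      A * C * ‖z‖ ^ 2 ≤ ∑' p : I × J, ‖(inner ℂ z (tm (u p.1) (v p.2)) : ℂ)‖ ^ 2 := by
    have hcl : IsClosed {z : T | A * C * ‖z‖ ^ 2 ≤ ‖φ z‖ ^ 2} := by
      apply isClosed_le
      · exact continuous_const.mul (continuous_norm.pow 2)
      · exact (hφlip.continuous.norm.pow 2)
    have hsub : ((Submodule.span ℂ {z : T | ∃ x y, tm x y = z} : Submodule ℂ T) : Set T) ⊆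
        {z : T | A * C * ‖z‖ ^ 2 ≤ ‖φ z‖ ^ 2} := by
      intro z hzc
      obtain ⟨_, hlow, _⟩ := spanP z hzc
      show A * C * ‖z‖ ^ 2 ≤ ‖φ z‖ ^ 2
      rw [hφnorm z]
      exact hlow
    intro z
    have hzc : z ∈ closure ((Submodule.span ℂ {z : T | ∃ x y, tm x y = z} : Submodule ℂ T) :
        Set T) := by rw [hclosure]; trivial
    have := hcl.closure_subset_iff.mpr hsub hzc
    calc A * C * ‖z‖ ^ 2 ≤ ‖φ z‖ ^ 2 := this
      _ = _ := hφnorm z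
  intro z
  exact ⟨stepB z, stepD z, stepC z⟩
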